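/- Let D be a squarefree integer, p an odd prime, and let c, k, ℓ be positive integers with gcd(c·k, p) = 1 and c·k < p^ℓ. Set N = c·k·p^ℓ − 1, assume N is odd and that the Jacobi symbol (D/N) = −1. Suppose w ∈ ℤ[√D] satisfies N(w) ≡ 1 (mod N) and w^{(N+1)/p} ≢ 1 (mod N) (note (N+1)/p = c·k·p^{ℓ−1}). Then N is prime if and only if Φ_p(w^{(N+1)/p}) ≡ 0 (mod N). -/

import Mathlib

set_option maxHeartbeats 1000000

open Polynomial

section Frobenius

variable {R : Type*} [CommRing R] (q : ℕ) [hq : Fact q.Prime] [CharP R q]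

private lemma aux_intCast_pow_self (a : ℤ) : ((a : R)) ^ q = (a : R) := by
  have h : ((a ^ q - a : ℤ) : ZMod q) = 0 := by
    push_cast
    rw [ZMod.pow_card]
    ring
  rw [ZMod.intCast_zmod_eq_zero_iff_dvd] at h
  have h2 : ((a ^ q - a : ℤ) : R) = 0 := (CharP.intCast_eq_zero_iff R q _).2 h
  push_cast at h2
  linear_combination h2

private lemma aux_frob (hq2 : q ≠ 2) {D : ℤ} (r : R) (hr : r * r = (D : R)) (a b : ℤ) :
    ((a : R) + (b : R) * r) ^ q = (a : R) + ((b * D ^ (q / 2) : ℤ) : R) * r := by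
  have hodd : q = 2 * (q / 2) + 1 := by
    have := hq.out.eq_one_or_self_of_dvd 2
    have h2 : q % 2 = 1 := Nat.odd_iff.1 (hq.out.odd_of_ne_two hq2)
    omega
  have hrq : r ^ q = ((D ^ (q / 2) : ℤ) : R) * r := by
    conv_lhs => rw [hodd]
    rw [pow_succ, pow_mul, pow_two, hr]
    push_cast
    ring
  rw [add_pow_char, mul_pow, aux_intCast_pow_self, aux_intCast_pow_self, hrq]
  push_cast
  ring

private lemma aux_frob_sq (hq2 : q ≠ 2) {D : ℤ} (hqD : ¬ ((q : ℤ) ∣ D)) (r : R)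
    (hr : r * r = (D : R)) (a b : ℤ) :
    ((a : R) + (b : R) * r) ^ (q ^ 2) = (a : R) + (b : R) * r := by
  have key : ((b * D ^ (q / 2) * D ^ (q / 2) - b : ℤ) : R) = 0 := by
    rw [CharP.intCast_eq_zero_iff R q]
    have h1 : (q : ℤ) ∣ D ^ (q - 1) - 1 := by
      have hD0 : (D : ZMod q) ≠ 0 := by
        rw [Ne, ZMod.intCast_zmod_eq_zero_iff_dvd]; exact hqD
      have := ZMod.pow_card_sub_one_eq_one hD0
      rw [← ZMod.intCast_zmod_eq_zero_iff_dvd]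
      push_cast
      rw [this]; ring
    have hqq : q / 2 + q / 2 = q - 1 := by
      have h2 : q % 2 = 1 := Nat.odd_iff.1 (hq.out.odd_of_ne_two hq2)
      omega
    have : b * D ^ (q / 2) * D ^ (q / 2) - b = b * (D ^ (q - 1) - 1) := by
      rw [← hqq, pow_add]; ring
    rw [this]
    exact Dvd.dvd.mul_left h1 b
  rw [pow_two, pow_mul, aux_frob q hq2 r hr, aux_frob q hq2 r hr]
  push_cast at key ⊢
  linear_combination r * key

end Frobenius

private lemma aux_pow_dvd_order {p d m ℓ : ℕ} (hp : p.Prime) (hℓ : 0 < ℓ) (hm : 0 < m)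
    (h1 : d ∣ m * p ^ ℓ) (h2 : ¬ d ∣ m * p ^ (ℓ - 1)) : p ^ ℓ ∣ d := by
  have hd0 : d ≠ 0 := by
    rintro rfl
    have := Nat.eq_zero_of_zero_dvd h1
    have hppos : 0 < p ^ ℓ := Nat.pow_pos hp.pos
    nlinarith
  set a := d.factorization p with ha
  have hsplit : p ^ a * (d / p ^ a) = d := Nat.ordProj_mul_ordCompl_eq_self d p
  have hcop : p.Coprime (d / p ^ a) := Nat.coprime_ordCompl hp hd0
  have hedvd : (d / p ^ a) ∣ m * p ^ ℓ := dvd_trans (Nat.ordCompl_dvd d p) h1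
  have hem : (d / p ^ a) ∣ m := (hcop.symm.pow_right ℓ).dvd_of_dvd_mul_right hedvd
  by_cases hcase : a ≤ ℓ - 1
  · exfalso
    apply h2
    calc d = p ^ a * (d / p ^ a) := hsplit.symm
    _ ∣ p ^ (ℓ - 1) * m := mul_dvd_mul (pow_dvd_pow p hcase) hem
    _ = m * p ^ (ℓ - 1) := mul_comm _ _
  · exact dvd_trans (pow_dvd_pow p (by omega)) (Nat.ordProj_dvd d p)

/-- Theorem 1.1: primality criterion for `N = c·k·p^ℓ − 1` via the `p`-th
cyclotomic polynomial evaluated in `ℤ[√D]`. -/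
theorem stmt_0 (D : ℤ) (hD : Squarefree D)
    (p : ℕ) (hp : p.Prime) (hpodd : Odd p)
    (c k ℓ : ℕ) (hc : 0 < c) (hk : 0 < k) (hℓ : 0 < ℓ)
    (hgcd : Nat.gcd (c * k) p = 1) (hlt : c * k < p ^ ℓ)
    (N : ℕ) (hN : N = c * k * p ^ ℓ - 1) (hNodd : Odd N)
    (hJ : jacobiSym D N = -1)
    (w : Zsqrtd D)
    (hnorm : (N : ℤ) ∣ (w.norm - 1))
    (hw : ¬ (N : Zsqrtd D) ∣ (w ^ (c * k * p ^ (ℓ - 1)) - 1)) :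
    N.Prime ↔
      (N : Zsqrtd D) ∣
        (Polynomial.aeval (w ^ (c * k * p ^ (ℓ - 1))) (Polynomial.cyclotomic p ℤ)) := by
  haveI : Fact p.Prime := ⟨hp⟩
  set s := c * k * p ^ (ℓ - 1) with hs
  have hp3 : 3 ≤ p := by
    have h1 := hp.two_le
    have h2 := Nat.odd_iff.1 hpodd
    omega
  have hpl3 : 3 ≤ p ^ ℓ := le_trans hp3 (Nat.le_self_pow (by omega) p)
  have hN1 : N + 1 = c * k * p ^ ℓ := by
    have : 0 < c * k * p ^ ℓ := by positivity
    omega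
  have hsp : s * p = c * k * p ^ ℓ := by
    rw [hs, mul_assoc, ← pow_succ]
    congr 2
    omega
  have hN2 : 2 ≤ N := by
    have h1 : 0 < c * k := by positivity
    have : p ^ ℓ ≤ c * k * p ^ ℓ := Nat.le_mul_of_pos_left _ h1
    omega
  have hpN : ¬ (p ∣ N) := by
    intro hdvd
    have h1 : p ∣ N + 1 := ⟨s, by rw [hN1, ← hsp]; ring⟩
    have h2 : p ∣ 1 := by
      have := Nat.dvd_sub h1 hdvd
      simpa using this
    have := Nat.le_of_dvd one_pos h2
    omega
  have hgcdDN : Int.gcd D N = 1 := by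
    by_contra h
    have : jacobiSym D N = 0 := jacobiSym.eq_zero_iff.2 ⟨by omega, h⟩
    omega
  -- the cyclotomic identity in ℤ√D
  have hcycl : (Polynomial.aeval (w ^ s) (Polynomial.cyclotomic p ℤ)) * (w ^ s - 1)
      = w ^ (c * k * p ^ ℓ) - 1 := by
    have hid := congrArg (Polynomial.eval (w ^ s))
      (Polynomial.cyclotomic_prime_mul_X_sub_one (Zsqrtd D) p)
    simp only [Polynomial.eval_mul, Polynomial.eval_sub, Polynomial.eval_pow,
      Polynomial.eval_X, Polynomial.eval_one] at hid
    have hmap : Polynomial.aeval (w ^ s) (Polynomial.cyclotomic p ℤ)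
        = Polynomial.eval (w ^ s) (Polynomial.cyclotomic p (Zsqrtd D)) := by
      rw [Polynomial.aeval_def, ← Polynomial.eval_map, Polynomial.map_cyclotomic]
    rw [hmap, hid, ← pow_mul, hsp]
  constructor
  · -- N prime → divisibility
    intro hNP
    haveI : Fact N.Prime := ⟨hNP⟩
    have hleg : legendreSym N D = -1 := by
      rw [jacobiSym.legendreSym.to_jacobiSym]; exact hJ
    have hnsq : ¬ IsSquare ((D : ℤ) : ZMod N) := (legendreSym.eq_neg_one_iff N).1 hleg
    have hirr : Irreducible (X ^ 2 - C ((D : ℤ) : ZMod N) : (ZMod N)[X]) :=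
      X_pow_sub_C_irreducible_of_prime Nat.prime_two
        (fun b hb => hnsq ⟨b, by rw [← hb]; ring⟩)
    haveI : Fact (Irreducible (X ^ 2 - C ((D : ℤ) : ZMod N) : (ZMod N)[X])) := ⟨hirr⟩
    haveI : CharP (AdjoinRoot (X ^ 2 - C ((D : ℤ) : ZMod N) : (ZMod N)[X])) N :=
      charP_of_injective_algebraMap' (ZMod N) N
    set f : (ZMod N)[X] := X ^ 2 - C ((D : ℤ) : ZMod N) with hf
    set r : AdjoinRoot f := AdjoinRoot.root f with hrdef
    have hr : r * r = ((D : ℤ) : AdjoinRoot f) := by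
      have h0 := AdjoinRoot.eval₂_root f
      rw [hf, Polynomial.eval₂_sub, Polynomial.eval₂_pow, Polynomial.eval₂_X,
        Polynomial.eval₂_C, sub_eq_zero] at h0
      rw [hrdef, ← sq, h0, map_intCast]
    set ψ : Zsqrtd D →+* AdjoinRoot f := Zsqrtd.lift ⟨r, hr⟩ with hψ
    have hker : ∀ z : Zsqrtd D, ψ z = 0 ↔ (N : Zsqrtd D) ∣ z := by
      intro z
      constructor
      · intro h0
        rw [hψ, Zsqrtd.lift_apply_apply] at h0
        have hmk : AdjoinRoot.mk f (C ((z.re : ℤ) : ZMod N) + C ((z.im : ℤ) : ZMod N) * X)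
            = 0 := by
          rw [map_add, map_mul, AdjoinRoot.mk_C, AdjoinRoot.mk_C, AdjoinRoot.mk_X,
            map_intCast, map_intCast]
          exact h0
        rw [AdjoinRoot.mk_eq_zero] at hmk
        have hdeg : (C ((z.re : ℤ) : ZMod N) + C ((z.im : ℤ) : ZMod N) * X).degree
            < f.degree := by
          rw [hf, Polynomial.degree_X_pow_sub_C two_pos]
          refine lt_of_le_of_lt ?_ (by decide : (1 : WithBot ℕ) < 2)
          rw [add_comm]
          exact Polynomial.degree_linear_le
        have hzero := Polynomial.eq_zero_of_dvd_of_degree_lt hmk hdeg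
        have h0c : ((z.re : ℤ) : ZMod N) = 0 := by
          have := congrArg (fun g => Polynomial.coeff g 0) hzero
          simpa using this
        have h1c : ((z.im : ℤ) : ZMod N) = 0 := by
          have h := congrArg (fun g => Polynomial.coeff g 1) hzero
          simp only [Polynomial.coeff_add, Polynomial.coeff_C_mul, Polynomial.coeff_X_one,
            Polynomial.coeff_C, Polynomial.coeff_zero, mul_one] at h
          simpa using h
        rw [ZMod.intCast_zmod_eq_zero_iff_dvd] at h0c h1c
        have : ((N : ℤ) : Zsqrtd D) ∣ z := (Zsqrtd.intCast_dvd _ _).2 ⟨h0c, h1c⟩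
        simpa using this
      · rintro ⟨t, rfl⟩
        rw [map_mul, map_natCast, CharP.cast_eq_zero, zero_mul]
    have hNne2 : N ≠ 2 := by
      have := Nat.odd_iff.1 hNodd; omega
    have hfrob : ψ w ^ N = ψ (star w) := by
      have hfr := aux_frob (R := AdjoinRoot f) N hNne2 r hr w.re w.im
      have hcoef : ((w.im * D ^ (N / 2) : ℤ) : AdjoinRoot f)
          = ((-w.im : ℤ) : AdjoinRoot f) := by
        have hdvd : (N : ℤ) ∣ (w.im * D ^ (N / 2) - (-w.im)) := by
          have heul : ((D : ℤ) : ZMod N) ^ (N / 2) = -1 := by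
            have h := (legendreSym.eq_pow N D).symm
            rw [hleg] at h
            push_cast at h
            exact h
          rw [← ZMod.intCast_zmod_eq_zero_iff_dvd]
          push_cast
          rw [heul]; ring
        have hz := (CharP.intCast_eq_zero_iff (AdjoinRoot f) N _).2 hdvd
        push_cast at hz ⊢
        linear_combination hz
      rw [hψ, Zsqrtd.lift_apply_apply, Zsqrtd.lift_apply_apply, Zsqrtd.re_star,
        Zsqrtd.im_star, hfr, hcoef]
    have hψnorm : ψ w * ψ (star w) = 1 := by
      rw [← map_mul, ← Zsqrtd.norm_eq_mul_conj, map_intCast]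
      have hz : ((w.norm - 1 : ℤ) : AdjoinRoot f) = 0 :=
        (CharP.intCast_eq_zero_iff (AdjoinRoot f) N _).2 hnorm
      push_cast at hz
      linear_combination hz
    have hw1 : ψ w ^ (c * k * p ^ ℓ) = 1 := by
      rw [← hN1, pow_succ, hfrob, mul_comm]
      exact hψnorm
    have h0 : ψ (Polynomial.aeval (w ^ s) (Polynomial.cyclotomic p ℤ)) * ψ (w ^ s - 1)
        = 0 := by
      rw [← map_mul, hcycl, map_sub, map_pow, map_one, hw1, sub_self]
    have hne : ψ (w ^ s - 1) ≠ 0 := fun h => hw ((hker _).1 h)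
    rcases mul_eq_zero.1 h0 with h | h
    · exact (hker _).1 h
    · exact absurd h hne
  · -- divisibility → N prime
    intro hΦ
    by_contra hNP
    set q := N.minFac with hqdef
    have hq : q.Prime := Nat.minFac_prime (by omega)
    have hqN : q ∣ N := Nat.minFac_dvd N
    haveI : Fact q.Prime := ⟨hq⟩
    have hq2 : q ≠ 2 := by
      rintro h
      have h2 : (2 : ℕ) ∣ N := h ▸ hqN
      have := Nat.odd_iff.1 hNodd
      omega
    have hq3 : 3 ≤ q := by have := hq.two_le; omega
    have hqsq : q ^ 2 ≤ N := Nat.minFac_sq_le_self (by omega) hNP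
    have hqD : ¬ ((q : ℤ) ∣ D) := by
      intro hdvd
      have h1 : (q : ℤ) ∣ (Int.gcd D N : ℤ) :=
        Int.dvd_coe_gcd hdvd (Int.natCast_dvd_natCast.2 hqN)
      rw [hgcdDN] at h1
      have h2 : q ∣ 1 := Int.natCast_dvd_natCast.1 (by exact_mod_cast h1)
      have := Nat.le_of_dvd one_pos h2
      omega
    set I : Ideal (Zsqrtd D) := Ideal.span {((q : ℤ) : Zsqrtd D)} with hI
    set mk : Zsqrtd D →+* (Zsqrtd D ⧸ I) := Ideal.Quotient.mk I with hmkdef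
    have hmk0 : ∀ z : Zsqrtd D, mk z = 0 ↔ ((q : ℤ) : Zsqrtd D) ∣ z := fun z => by
      rw [hmkdef, Ideal.Quotient.eq_zero_iff_mem, hI, Ideal.mem_span_singleton]
    haveI : Nontrivial (Zsqrtd D ⧸ I) := by
      refine ⟨1, 0, fun h => ?_⟩
      have h1 : mk 1 = 0 := by rw [map_one, h]
      have h2 : ((q : ℤ) : Zsqrtd D) ∣ 1 := (hmk0 1).1 h1
      have h3 := ((Zsqrtd.intCast_dvd (q : ℤ) (1 : Zsqrtd D)).1 h2).1
      simp only [Zsqrtd.re_one] at h3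
      have := Int.le_of_dvd one_pos h3
      omega
    haveI : CharP (Zsqrtd D ⧸ I) q := by
      refine (CharP.charP_iff_prime_eq_zero hq).2 ?_
      have h1 : ((q : ℕ) : Zsqrtd D ⧸ I) = mk ((q : ℕ) : Zsqrtd D) := (map_natCast mk q).symm
      rw [h1, hmk0]
      exact ⟨1, by push_cast; ring⟩
    set r : Zsqrtd D ⧸ I := mk Zsqrtd.sqrtd with hr0
    have hr : r * r = ((D : ℤ) : Zsqrtd D ⧸ I) := by
      rw [hr0, ← map_mul, Zsqrtd.dmuld, map_intCast]
    have hmkz : ∀ z : Zsqrtd D,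
        mk z = ((z.re : ℤ) : Zsqrtd D ⧸ I) + ((z.im : ℤ) : Zsqrtd D ⧸ I) * r := fun z => by
      conv_lhs => rw [show z = (⟨z.re, z.im⟩ : Zsqrtd D) from rfl, Zsqrtd.decompose]
      rw [map_add, map_mul, map_intCast, map_intCast, hr0]
      ring
    have hmulstar : mk w * mk (star w) = 1 := by
      rw [← map_mul, ← Zsqrtd.norm_eq_mul_conj, map_intCast]
      have hdq : (q : ℤ) ∣ w.norm - 1 := dvd_trans (Int.natCast_dvd_natCast.2 hqN) hnorm
      have hz : ((w.norm - 1 : ℤ) : Zsqrtd D ⧸ I) = 0 :=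
        (CharP.intCast_eq_zero_iff _ q _).2 hdq
      push_cast at hz
      linear_combination hz
    set u : (Zsqrtd D ⧸ I)ˣ :=
      ⟨mk w, mk (star w), hmulstar, by rw [mul_comm]; exact hmulstar⟩ with hu
    have hqNz : ((q : ℤ) : Zsqrtd D) ∣ ((N : ℕ) : Zsqrtd D) := by
      have h1 : (q : ℤ) ∣ (N : ℤ) := Int.natCast_dvd_natCast.2 hqN
      have h2 := map_dvd (Int.castRingHom (Zsqrtd D)) h1
      simpa using h2
    have hu1 : u ^ (c * k * p ^ ℓ) = 1 := by
      apply Units.ext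
      show (mk w) ^ (c * k * p ^ ℓ) = 1
      have h1 : (N : Zsqrtd D) ∣ w ^ (c * k * p ^ ℓ) - 1 := by
        rw [← hcycl]; exact Dvd.dvd.mul_right hΦ _
      have h2 : mk (w ^ (c * k * p ^ ℓ) - 1) = 0 :=
        (hmk0 _).2 (dvd_trans hqNz h1)
      rw [map_sub, map_one, map_pow, sub_eq_zero] at h2
      exact h2
    have hus : u ^ s ≠ 1 := by
      intro h
      have h1 : mk (w ^ s - 1) = 0 := by
        have h0 : (mk w) ^ s = 1 := congrArg Units.val h
        rw [map_sub, map_one, map_pow, h0, sub_self]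
      have hqws : ((q : ℤ) : Zsqrtd D) ∣ w ^ s - 1 := (hmk0 _).1 h1
      have h2 : w ^ s - 1 ∣
          (Polynomial.aeval (w ^ s) (Polynomial.cyclotomic p ℤ)) - ((p : ℤ) : Zsqrtd D) := by
        have h3 := Polynomial.sub_dvd_eval_sub (w ^ s) 1
          ((Polynomial.cyclotomic p ℤ).map (Int.castRingHom (Zsqrtd D)))
        rw [Polynomial.eval_map, Polynomial.eval_map, Polynomial.eval₂_at_one,
          Polynomial.eval_one_cyclotomic_prime] at h3
        rw [Polynomial.aeval_def]
        simpa using h3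
      have hqΦ : ((q : ℤ) : Zsqrtd D) ∣
          Polynomial.aeval (w ^ s) (Polynomial.cyclotomic p ℤ) := dvd_trans hqNz hΦ
      have hqp : ((q : ℤ) : Zsqrtd D) ∣ ((p : ℤ) : Zsqrtd D) := by
        have h4 := dvd_sub hqΦ (dvd_trans hqws h2)
        simpa using h4
      have h5 : (q : ℤ) ∣ (p : ℤ) := by
        have h6 := ((Zsqrtd.intCast_dvd (q : ℤ) ((p : ℤ) : Zsqrtd D)).1 hqp).1
        simpa using h6
      have hqp' : q ∣ p := Int.natCast_dvd_natCast.1 h5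
      have : q = p := (Nat.prime_dvd_prime_iff_eq hq hp).1 hqp'
      exact hpN (this ▸ hqN)
    have hfr : (mk w) ^ (q ^ 2) = mk w := by
      rw [hmkz w]
      exact aux_frob_sq q hq2 hqD r hr w.re w.im
    have huq2 : u ^ (q ^ 2 - 1) = 1 := by
      have hq1 : 1 ≤ q ^ 2 := Nat.one_le_pow _ _ hq.pos
      have h5 : u ^ (q ^ 2) = u := by
        apply Units.ext
        show (mk w) ^ (q ^ 2) = mk w
        exact hfr
      have h6 : u ^ (q ^ 2 - 1) * u = 1 * u := by
        rw [one_mul, ← pow_succ, Nat.sub_add_cancel hq1, h5]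
      exact mul_right_cancel h6
    set d := orderOf u with hd
    have hd1 : d ∣ c * k * p ^ ℓ := orderOf_dvd_of_pow_eq_one hu1
    have hd2 : ¬ d ∣ s := fun h => hus (orderOf_dvd_iff_pow_eq_one.1 h)
    have hd3 : d ∣ q ^ 2 - 1 := orderOf_dvd_of_pow_eq_one huq2
    have hpl_d : p ^ ℓ ∣ d := aux_pow_dvd_order hp hℓ (by positivity) hd1 hd2
    have hpl_q : p ^ ℓ ∣ q ^ 2 - 1 := dvd_trans hpl_d hd3
    have hfact : q ^ 2 - 1 = (q - 1) * (q + 1) := by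
      obtain ⟨m, hm⟩ : ∃ m, q = m + 1 := ⟨q - 1, by omega⟩
      rw [hm]
      have h1 : (m + 1) ^ 2 = m * (m + 2) + 1 := by ring
      rw [h1, Nat.add_sub_cancel, Nat.add_sub_cancel]
    have hqlt : q < p ^ ℓ := by
      have hP : 0 < p ^ ℓ := by positivity
      have h1 : q * q ≤ N := by have := hqsq; rwa [pow_two] at this
      have h2 : c * k * p ^ ℓ < p ^ ℓ * p ^ ℓ := Nat.mul_lt_mul_of_lt_of_le hlt le_rfl hP
      have h4 : N < c * k * p ^ ℓ := by omega
      exact Nat.mul_self_lt_mul_self_iff.1 (lt_of_le_of_lt h1 (lt_trans h4 h2))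
    rw [hfact] at hpl_q
    by_cases hc1 : p ∣ q - 1
    · have hnc : ¬ p ∣ q + 1 := by
        intro h8
        have h9 : p ∣ 2 := by
          have h10 := Nat.dvd_sub h8 hc1
          simpa [show q + 1 - (q - 1) = 2 by omega] using h10
        have := Nat.le_of_dvd two_pos h9
        omega
      have hcop : Nat.Coprime (p ^ ℓ) (q + 1) :=
        Nat.Coprime.pow_left ℓ ((Nat.Prime.coprime_iff_not_dvd hp).2 hnc)
      have h9 : p ^ ℓ ∣ q - 1 := hcop.dvd_of_dvd_mul_right hpl_q
      have := Nat.le_of_dvd (by omega) h9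
      omega
    · have hcop : Nat.Coprime (p ^ ℓ) (q - 1) :=
        Nat.Coprime.pow_left ℓ ((Nat.Prime.coprime_iff_not_dvd hp).2 hc1)
      have h9 : p ^ ℓ ∣ q + 1 := hcop.dvd_of_dvd_mul_left hpl_q
      have h10 := Nat.le_of_dvd (by omega) h9
      have heq : q + 1 = p ^ ℓ := by omega
      have hodd : Odd (p ^ ℓ) := hpodd.pow
      have hqodd := Nat.odd_iff.1 (hq.odd_of_ne_two hq2)
      have := Nat.odd_iff.1 hodd
      omega
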